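/- Measure of the union bound for bushy subtrees: let (D_i)_{i∈ℕ} be finite sets of naturals with |D_i| = i + 2 + n for a fixed n, and let T_i ⊆ 2^{<ℕ} be the downward closure of { σ : ∃ a, b ∈ D_i, a, b < |σ|, σ(a) = 0 ∧ σ(b) = 1 }. Then the measure of the set of infinite binary sequences all of whose prefixes lie in T_i equals 1 − 2^{-(|D_i|−1)} = 1 − 2^{-(i+1+n)}, and consequently the intersection ⋂_i [T_i] has measure at least 1 − 2^{-n}. -/

import Mathlib

open Classical Filter

noncomputable section


/-- The number of strings of length `s` in `T`. -/
def lvlCard (T : Set (List Bool)) (s : ℕ) : ℕ :=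
  {σ ∈ T | σ.length = s}.ncard

/-- The measure of the set of paths of a tree `T ⊆ 2^{<ℕ}` under the uniform
measure on Cantor space. -/
def treeMeasure (T : Set (List Bool)) : ℝ :=
  ⨅ s : ℕ, (lvlCard T s : ℝ) / 2 ^ s

open Finset


def allLists (s : ℕ) : Finset (List Bool) :=
  (Finset.univ : Finset (Fin s → Bool)).image List.ofFn

lemma mem_allLists {s : ℕ} {σ : List Bool} : σ ∈ allLists s ↔ σ.length = s := by
  constructor
  · intro h
    simp only [allLists, Finset.mem_image] at h
    obtain ⟨f, -, rfl⟩ := h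
    simp
  · intro h
    subst h
    simp only [allLists, Finset.mem_image]
    exact ⟨fun i => σ[i], Finset.mem_univ _, List.ofFn_getElem⟩

lemma card_allLists (s : ℕ) : (allLists s).card = 2 ^ s := by
  rw [allLists, Finset.card_image_of_injective _ List.ofFn_injective]
  simp

lemma memT (D : Finset ℕ) (hD : 2 ≤ D.card) (σ : List Bool) :
    (∃ τ : List Bool, σ <+: τ ∧ ∃ a ∈ D, ∃ b ∈ D, a < τ.length ∧ b < τ.length ∧
      τ.getD a true = false ∧ τ.getD b false = true) ↔
    (∃ a ∈ D, σ.length ≤ a) ∨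
      ((∃ a ∈ D, σ.getD a true = false) ∧ (∃ b ∈ D, σ.getD b false = true)) := by
  constructor
  · rintro ⟨τ, hpre, a, ha, b, hb, hal, hbl, hav, hbv⟩
    by_cases hall : ∀ c ∈ D, c < σ.length
    · right
      have haσ := hall a ha
      have hbσ := hall b hb
      refine ⟨⟨a, ha, ?_⟩, ⟨b, hb, ?_⟩⟩
      · rw [List.getD_eq_getElem _ _ haσ, hpre.getElem haσ,
          ← List.getD_eq_getElem τ true hal]; exact hav
      · rw [List.getD_eq_getElem _ _ hbσ, hpre.getElem hbσ,
          ← List.getD_eq_getElem τ false hbl]; exact hbv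
    · left; push_neg at hall; obtain ⟨c, hc, hcl⟩ := hall; exact ⟨c, hc, hcl⟩
  · rintro (⟨c, hc, hcl⟩ | ⟨⟨a, ha, hav⟩, ⟨b, hb, hbv⟩⟩)
    · obtain ⟨d, hd, hdc⟩ := Finset.exists_mem_ne
        (show 1 < D.card by omega) c
      by_cases hds : d < σ.length
      · obtain ⟨v, hv⟩ : ∃ v, σ.getD d true = v := ⟨_, rfl⟩
        have hτlen : (σ ++ List.replicate (c + 1 - σ.length) (!v)).length = c + 1 := by
          simp only [List.length_append, List.length_replicate]; omega
        have hτd : ∀ def' : Bool,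
            (σ ++ List.replicate (c + 1 - σ.length) (!v)).getD d def' = v := by
          intro def'
          rw [List.getD_eq_getElem _ _ (by omega), List.getElem_append_left hds,
            ← List.getD_eq_getElem σ true hds]
          exact hv
        have hτc : ∀ def' : Bool,
            (σ ++ List.replicate (c + 1 - σ.length) (!v)).getD c def' = !v := by
          intro def'
          rw [List.getD_eq_getElem _ _ (by omega), List.getElem_append_right (by omega)]
          exact List.getElem_replicate _
        cases v with
        | false =>
          exact ⟨_, List.prefix_append _ _, d, hd, c, hc, by omega, by omega,
            hτd true, by simpa using hτc false⟩
        | true =>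
          exact ⟨_, List.prefix_append _ _, c, hc, d, hd, by omega, by omega,
            by simpa using hτc true, hτd false⟩
      · push_neg at hds
        have hτlen : (σ ++ (List.replicate (max c d + 1 - σ.length) true).set
            (c - σ.length) false).length = max c d + 1 := by
          simp only [List.length_append, List.length_set, List.length_replicate]; omega
        have hτc : (σ ++ (List.replicate (max c d + 1 - σ.length) true).set
            (c - σ.length) false).getD c true = false := by
          rw [List.getD_eq_getElem _ _ (by omega), List.getElem_append_right (by omega)]
          have hlt : c - σ.length < ((List.replicate (max c d + 1 - σ.length) true).set
              (c - σ.length) false).length := by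
            simp only [List.length_set, List.length_replicate]; omega
          exact List.getElem_set_self hlt
        have hτd : (σ ++ (List.replicate (max c d + 1 - σ.length) true).set
            (c - σ.length) false).getD d false = true := by
          rw [List.getD_eq_getElem _ _ (by omega),
            List.getElem_append_right (by omega : σ.length ≤ d),
            List.getElem_set_ne (by omega)]
          exact List.getElem_replicate _
        exact ⟨_, List.prefix_append _ _, c, hc, d, hd, by omega, by omega, hτc, hτd⟩
    · have hal : a < σ.length := by
        by_contra h
        rw [List.getD_eq_default _ _ (le_of_not_gt h)] at hav; simp at hav
      have hbl : b < σ.length := by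
        by_contra h
        rw [List.getD_eq_default _ _ (le_of_not_gt h)] at hbv; simp at hbv
      exact ⟨σ, List.prefix_refl σ, a, ha, b, hb, hal, hbl, hav, hbv⟩

def G (D : Finset ℕ) (s : ℕ) (σ : List Bool) : Prop :=
  (∃ a ∈ D, s ≤ a) ∨
    ((∃ a ∈ D, σ.getD a true = false) ∧ (∃ b ∈ D, σ.getD b false = true))

lemma getD_eq_getD (σ : List Bool) (a : ℕ) (h : a < σ.length) (d d' : Bool) :
    σ.getD a d = σ.getD a d' := by
  rw [List.getD_eq_getElem _ _ h, List.getD_eq_getElem _ _ h]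

lemma card_fixedFun (s : ℕ) (E : Finset (Fin s)) (v : Bool) :
    (Finset.univ.filter (fun f : Fin s → Bool => ∀ a ∈ E, f a = v)).card
      = 2 ^ (s - E.card) := by
  have e : {f : Fin s → Bool // ∀ a ∈ E, f a = v} ≃ ((↥(Eᶜ : Finset (Fin s))) → Bool) :=
    { toFun := fun f a => f.1 a.1
      invFun := fun g => ⟨fun a => if h : a ∈ E then v else g ⟨a, by simp [h]⟩,
        fun a ha => by simp [ha]⟩
      left_inv := by
        rintro ⟨f, hf⟩
        ext a
        by_cases h : a ∈ E
        · simp [h, hf a h]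
        · simp [h]
      right_inv := by
        intro g
        funext a
        obtain ⟨a, ha⟩ := a
        have : a ∉ E := by simpa using ha
        simp [this] }
  have h1 : (Finset.univ.filter (fun f : Fin s → Bool => ∀ a ∈ E, f a = v)).card
      = Fintype.card {f : Fin s → Bool // ∀ a ∈ E, f a = v} := by
    rw [Fintype.card_subtype]
  rw [h1, Fintype.card_congr e]
  simp [Finset.card_compl]

lemma card_constLists (s : ℕ) (D : Finset ℕ) (hDs : ∀ a ∈ D, a < s) (v : Bool) :
    ((allLists s).filter (fun σ => ∀ a ∈ D, σ.getD a false = v)).card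
      = 2 ^ (s - D.card) := by
  rw [allLists, Finset.filter_image, Finset.card_image_of_injective _ List.ofFn_injective]
  rw [← Finset.card_attachFin D hDs, ← card_fixedFun s (D.attachFin hDs) v]
  congr 1
  apply Finset.filter_congr
  intro f _
  constructor
  · intro h j hj
    have hjD : (j : ℕ) ∈ D := (Finset.mem_attachFin hDs).1 hj
    have := h (j : ℕ) hjD
    rwa [List.getD_eq_getElem _ _ (by simpa using hDs _ hjD), List.getElem_ofFn,
      Fin.eta] at this
  · intro h a ha
    have hj : (⟨a, hDs a ha⟩ : Fin s) ∈ D.attachFin hDs := (Finset.mem_attachFin hDs).2 ha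
    have := h _ hj
    rw [List.getD_eq_getElem _ _ (by simpa using hDs _ ha), List.getElem_ofFn]
    exact this

lemma card_notG (s : ℕ) (D : Finset ℕ) (hD1 : D.Nonempty) (hDs : ∀ a ∈ D, a < s) :
    ((allLists s).filter (fun σ => ¬ G D s σ)).card = 2 ^ (s - D.card + 1) := by
  have hsplit : (allLists s).filter (fun σ => ¬ G D s σ)
      = (allLists s).filter (fun σ => ∀ a ∈ D, σ.getD a false = true)
        ∪ (allLists s).filter (fun σ => ∀ a ∈ D, σ.getD a false = false) := by
    ext σ
    simp only [Finset.mem_union, Finset.mem_filter]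
    constructor
    · rintro ⟨hσ, hG⟩
      have hlen : σ.length = s := mem_allLists.1 hσ
      simp only [G, not_or] at hG
      obtain ⟨-, h2⟩ := hG
      by_cases hA : ∃ a ∈ D, σ.getD a true = false
      · right
        refine ⟨hσ, fun b hb => ?_⟩
        have h3 : ¬ ∃ b ∈ D, σ.getD b false = true := fun hB => h2 ⟨hA, hB⟩
        push_neg at h3
        simpa using h3 b hb
      · left
        refine ⟨hσ, fun a ha => ?_⟩
        push_neg at hA
        have := hA a ha
        rw [getD_eq_getD σ a (by have := hDs a ha; omega) false true]
        simpa using this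
    · rintro (⟨hσ, hc⟩ | ⟨hσ, hc⟩)
      · have hlen : σ.length = s := mem_allLists.1 hσ
        refine ⟨hσ, ?_⟩
        simp only [G, not_or]
        constructor
        · rintro ⟨a, ha, has⟩
          exact absurd (hDs a ha) (by omega)
        · rintro ⟨⟨a, ha, hav⟩, -⟩
          rw [getD_eq_getD σ a (by have := hDs a ha; omega) true false] at hav
          have := (hc a ha).symm.trans hav
          simp at this
      · refine ⟨hσ, ?_⟩
        simp only [G, not_or]
        constructor
        · rintro ⟨a, ha, has⟩
          exact absurd (hDs a ha) (by omega)
        · rintro ⟨-, ⟨b, hb, hbv⟩⟩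
          have := (hc b hb).symm.trans hbv
          simp at this
  rw [hsplit, Finset.card_union_of_disjoint, card_constLists s D hDs true,
    card_constLists s D hDs false, pow_succ, mul_two]
  rw [Finset.disjoint_left]
  rintro σ h1 h2
  simp only [Finset.mem_filter] at h1 h2
  obtain ⟨a, ha⟩ := hD1
  have := (h1.2 a ha).symm.trans (h2.2 a ha)
  simp at this

lemma lvlCard_eq (T : Set (List Bool)) (s : ℕ) (p : List Bool → Prop)
    (h : ∀ σ : List Bool, σ.length = s → (σ ∈ T ↔ p σ)) :
    lvlCard T s = ((allLists s).filter p).card := by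
  rw [lvlCard, ← Set.ncard_coe_finset]
  congr 1
  ext σ
  simp only [Set.mem_setOf_eq, Finset.coe_filter, mem_allLists]
  constructor
  · rintro ⟨h1, h2⟩
    exact ⟨h2, (h σ h2).1 h1⟩
  · rintro ⟨h1, h2⟩
    exact ⟨(h σ h1).2 h2, h1⟩

/-- Measure computation for the trees `T_i` forcing non-homogeneity on `D_i`,
and the union bound for their intersection. -/
theorem stmt13 (n : ℕ) (D : ℕ → Finset ℕ) (hD : ∀ i, (D i).card = i + 2 + n)
    (T : ℕ → Set (List Bool))
    (hT : ∀ i, T i = {σ : List Bool | ∃ τ : List Bool, σ <+: τ ∧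
      ∃ a ∈ D i, ∃ b ∈ D i, a < τ.length ∧ b < τ.length ∧
        τ.getD a true = false ∧ τ.getD b false = true}) :
    (∀ i, treeMeasure (T i) = 1 - 1 / 2 ^ (i + 1 + n)) ∧
    1 - 1 / 2 ^ n ≤ treeMeasure (⋂ i, T i) := by
  have hD2 : ∀ i, 2 ≤ (D i).card := fun i => by rw [hD]; omega
  have hD1 : ∀ i, (D i).Nonempty := fun i => Finset.card_pos.1 (by have := hD2 i; omega)
  have hmem : ∀ i s (σ : List Bool), σ.length = s → (σ ∈ T i ↔ G (D i) s σ) := by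
    intro i s σ hσ
    rw [hT i, Set.mem_setOf_eq, memT (D i) (hD2 i) σ]
    simp only [G, hσ]
  have hratio : ∀ i s, (∀ a ∈ D i, a < s) →
      (lvlCard (T i) s : ℝ) / 2 ^ s = 1 - 1 / 2 ^ (i + 1 + n) := by
    intro i s hall
    have hks : (D i).card ≤ s := by
      have hsub : D i ⊆ Finset.range s := fun a ha => Finset.mem_range.2 (hall a ha)
      simpa using Finset.card_le_card hsub
    have hcardG : ((allLists s).filter (G (D i) s)).card
        = 2 ^ s - 2 ^ (s - (D i).card + 1) := by
      have h1 := Finset.card_filter_add_card_filter_not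
        (s := allLists s) (G (D i) s)
      rw [card_notG s (D i) (hD1 i) hall, card_allLists] at h1
      omega
    rw [lvlCard_eq (T i) s (G (D i) s) (fun σ hσ => hmem i s σ hσ), hcardG]
    have hk2 : 2 ≤ (D i).card := hD2 i
    have hle : 2 ^ (s - (D i).card + 1) ≤ 2 ^ s :=
      Nat.pow_le_pow_right (by norm_num) (by omega)
    have hmul : (2:ℝ) ^ (s - (D i).card + 1) * 2 ^ (i + 1 + n) = 2 ^ s := by
      rw [← pow_add]
      congr 1
      have := hD i
      omega
    have h2s : (0:ℝ) < 2 ^ s := by positivity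
    rw [Nat.cast_sub hle]
    push_cast
    rw [sub_div, div_self (ne_of_gt h2s)]
    congr 1
    rw [div_eq_div_iff (ne_of_gt h2s) (by positivity : ((2:ℝ) ^ (i + 1 + n)) ≠ 0), one_mul]
    exact hmul
  have hratio1 : ∀ i s, (∃ a ∈ D i, s ≤ a) → (lvlCard (T i) s : ℝ) / 2 ^ s = 1 := by
    intro i s h
    rw [lvlCard_eq (T i) s (G (D i) s) (fun σ hσ => hmem i s σ hσ),
      Finset.filter_true_of_mem (fun σ _ => show G (D i) s σ from Or.inl h), card_allLists]
    push_cast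
    exact div_self (by positivity)
  constructor
  · intro i
    have hb : BddBelow (Set.range fun s : ℕ => (lvlCard (T i) s : ℝ) / 2 ^ s) := by
      refine ⟨0, ?_⟩
      rintro x ⟨s, rfl⟩
      positivity
    rw [treeMeasure]
    apply le_antisymm
    · have hs0 : ∀ a ∈ D i, a < (D i).sup id + 1 := fun a ha =>
        Nat.lt_succ_of_le (Finset.le_sup (f := id) ha)
      exact le_of_le_of_eq (ciInf_le hb ((D i).sup id + 1)) (hratio i _ hs0)
    · apply le_ciInf
      intro s
      by_cases h : ∀ a ∈ D i, a < s
      · exact le_of_eq (hratio i s h).symm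
      · push_neg at h
        obtain ⟨a, ha, h2⟩ := h
        rw [hratio1 i s ⟨a, ha, h2⟩]
        have : (0:ℝ) ≤ 1 / 2 ^ (i + 1 + n) := by positivity
        linarith
  · rw [treeMeasure]
    apply le_ciInf
    intro s
    have hl : lvlCard (⋂ i, T i) s
        = ((allLists s).filter (fun σ => ∀ i, G (D i) s σ)).card := by
      apply lvlCard_eq
      intro σ hσ
      simp only [Set.mem_iInter]
      exact forall_congr' fun i => hmem i s σ hσ
    have hsum := Finset.card_filter_add_card_filter_not
      (s := allLists s) (fun σ => ∀ i, G (D i) s σ)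
    rw [card_allLists] at hsum
    have hsub : (allLists s).filter (fun σ => ¬ ∀ i, G (D i) s σ) ⊆
        (Finset.range (s+1)).biUnion
          (fun i => (allLists s).filter (fun σ => ¬ G (D i) s σ)) := by
      intro σ hσ
      simp only [Finset.mem_filter] at hσ
      obtain ⟨hσ1, h2⟩ := hσ
      push_neg at h2
      obtain ⟨i, hi⟩ := h2
      have hall : ∀ a ∈ D i, a < s := by
        intro a ha
        by_contra hlt
        exact hi (show G (D i) s σ from Or.inl ⟨a, ha, by omega⟩)
      have his : i < s + 1 := by
        have hsub2 : D i ⊆ Finset.range s := fun a ha => Finset.mem_range.2 (hall a ha)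
        have := Finset.card_le_card hsub2
        rw [hD i, Finset.card_range] at this
        omega
      simp only [Finset.mem_biUnion]
      exact ⟨i, Finset.mem_range.2 his, Finset.mem_filter.2 ⟨hσ1, hi⟩⟩
    have hBi : ∀ i, (((allLists s).filter (fun σ => ¬ G (D i) s σ)).card : ℝ)
        ≤ 2 ^ s * (1/2) ^ (n + 1 + i) := by
      intro i
      by_cases h : ∀ a ∈ D i, a < s
      · rw [card_notG s (D i) (hD1 i) h]
        have hks : (D i).card ≤ s := by
          have hsub2 : D i ⊆ Finset.range s := fun a ha => Finset.mem_range.2 (h a ha)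
          simpa using Finset.card_le_card hsub2
        have hmul : (2:ℝ) ^ (s - (D i).card + 1) * 2 ^ (n + 1 + i) = 2 ^ s := by
          rw [← pow_add]
          congr 1
          have := hD i
          omega
        have heq : (2:ℝ) ^ (s - (D i).card + 1) = 2 ^ s * (1/2) ^ (n + 1 + i) := by
          rw [div_pow, one_pow, mul_one_div,
            eq_div_iff (by positivity : ((2:ℝ) ^ (n + 1 + i)) ≠ 0)]
          exact hmul
        push_cast
        exact le_of_eq heq
      · have hempty : (allLists s).filter (fun σ => ¬ G (D i) s σ) = ∅ := by
          apply Finset.filter_eq_empty_iff.2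
          intro σ _
          push_neg at h
          obtain ⟨a, ha, has⟩ := h
          exact not_not_intro (show G (D i) s σ from Or.inl ⟨a, ha, has⟩)
        rw [hempty]
        simp only [Finset.card_empty, Nat.cast_zero]
        positivity
    have hbad : (((allLists s).filter (fun σ => ¬ ∀ i, G (D i) s σ)).card : ℝ)
        ≤ 2 ^ s * (1/2) ^ n := by
      calc (((allLists s).filter (fun σ => ¬ ∀ i, G (D i) s σ)).card : ℝ)
          ≤ (((Finset.range (s+1)).biUnion
              (fun i => (allLists s).filter (fun σ => ¬ G (D i) s σ))).card : ℝ) :=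
            Nat.cast_le.2 (Finset.card_le_card hsub)
        _ ≤ ∑ i ∈ Finset.range (s+1),
              (((allLists s).filter (fun σ => ¬ G (D i) s σ)).card : ℝ) := by
            exact_mod_cast Finset.card_biUnion_le
        _ ≤ ∑ i ∈ Finset.range (s+1), 2 ^ s * (1/2) ^ (n + 1 + i) :=
            Finset.sum_le_sum (fun i _ => hBi i)
        _ = 2 ^ s * (1/2) ^ (n + 1) * ∑ i ∈ Finset.range (s+1), (1/2:ℝ) ^ i := by
            rw [Finset.mul_sum]
            refine Finset.sum_congr rfl fun i _ => ?_
            rw [pow_add]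
            ring
        _ ≤ 2 ^ s * (1/2) ^ (n + 1) * 2 :=
            mul_le_mul_of_nonneg_left (sum_geometric_two_le (s+1)) (by positivity)
        _ = 2 ^ s * (1/2) ^ n := by
            rw [pow_succ]
            ring
    have hA : (((allLists s).filter (fun σ => ∀ i, G (D i) s σ)).card : ℝ)
        = 2 ^ s - (((allLists s).filter (fun σ => ¬ ∀ i, G (D i) s σ)).card : ℝ) := by
      have := congrArg (Nat.cast : ℕ → ℝ) hsum
      push_cast at this
      linarith
    rw [hl, le_div_iff₀ (by positivity : (0:ℝ) < 2 ^ s)]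
    have hc : ((1:ℝ)/2) ^ n = 1 / 2 ^ n := by
      rw [div_pow, one_pow]
    have he : (1 - 1 / 2 ^ n) * 2 ^ s = 2 ^ s - 2 ^ s * ((1:ℝ)/2) ^ n := by
      rw [hc]
      ring
    rw [he, hA]
    linarith

end
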